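/- Let m ≥ 1 and let φ : [0,1]^m → [0,1]^m be an isometry (for the Euclidean metric) mapping the pair of points {(0,...,0), (1,...,1)} onto itself. Then φ is either of the form (x_1,...,x_m) ↦ (x_{τ(1)},...,x_{τ(m)}) for some permutation τ, or of the form (x_1,...,x_m) ↦ (1 - x_{τ(1)}, ..., 1 - x_{τ(m)}) for some permutation τ. -/

import Mathlib

open Finset

-- expansion of squared distance to a 0/1 vertex e_k
lemma stmt17_expand {m : ℕ} (w : Fin m → ℝ) (k : Fin m) :
    ∑ j, (w j - (if j = k then (1:ℝ) else 0))^2 = (∑ j, (w j)^2) - 2 * w k + 1 := by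
  have h : ∀ j : Fin m, (w j - (if j = k then (1:ℝ) else 0))^2
      = (w j)^2 + (if j = k then 1 - 2 * w j else 0) := by
    intro j; by_cases h : j = k <;> simp [h] <;> ring
  rw [Finset.sum_congr rfl (fun j _ => h j), Finset.sum_add_distrib,
    Finset.sum_ite_eq' Finset.univ k (fun j => 1 - 2 * w j)]
  simp; ring

-- expansion of squared distance to the vertex 1 - e_k
lemma stmt17_expand' {m : ℕ} (w : Fin m → ℝ) (k : Fin m) :
    ∑ j, (w j - (1 - if j = k then (1:ℝ) else 0))^2 = (∑ j, (w j - 1)^2) + 2 * w k - 1 := by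
  have h : ∀ j : Fin m, (w j - (1 - if j = k then (1:ℝ) else 0))^2
      = (w j - 1)^2 + (if j = k then 2 * w j - 1 else 0) := by
    intro j; by_cases h : j = k <;> simp [h] <;> ring
  rw [Finset.sum_congr rfl (fun j _ => h j), Finset.sum_add_distrib,
    Finset.sum_ite_eq' Finset.univ k (fun j => 2 * w j - 1)]
  simp; ring

-- vertex characterization: in the cube, sum = 1 and sum of squares = 1 forces e_k
lemma stmt17_vertex {m : ℕ} (y : Fin m → ℝ) (hy : ∀ j, y j ∈ Set.Icc (0:ℝ) 1)
    (hs : ∑ j, y j = 1) (hsq : ∑ j, (y j)^2 = 1) :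
    ∃ k, ∀ j, y j = if j = k then 1 else 0 := by
  classical
  have hzero : ∀ j, y j * (1 - y j) = 0 := by
    have hsum : ∑ j, y j * (1 - y j) = 0 := by
      have h1 : ∑ j, y j * (1 - y j) = (∑ j, y j) - ∑ j, (y j)^2 := by
        rw [← Finset.sum_sub_distrib]
        exact Finset.sum_congr rfl (fun j _ => by ring)
      rw [h1, hs, hsq]; ring
    intro j
    have hnn : ∀ j ∈ Finset.univ, 0 ≤ y j * (1 - y j) := fun j _ =>
      mul_nonneg (hy j).1 (by linarith [(hy j).2])
    exact (Finset.sum_eq_zero_iff_of_nonneg hnn).mp hsum j (Finset.mem_univ j)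
  have h01 : ∀ j, y j = 0 ∨ y j = 1 := by
    intro j
    rcases mul_eq_zero.mp (hzero j) with h | h
    · exact Or.inl h
    · exact Or.inr (by linarith)
  set s := Finset.univ.filter (fun j => y j = 1) with hsdef
  have hcards : (s.card : ℝ) = 1 := by
    have h2 : ∑ j, y j = ∑ j ∈ s, (1:ℝ) := by
      rw [Finset.sum_filter]
      refine Finset.sum_congr rfl (fun j _ => ?_)
      rcases h01 j with h | h <;> simp [h]
    rw [h2, Finset.sum_const, nsmul_eq_mul, mul_one] at hs
    exact hs
  have hcard : s.card = 1 := by exact_mod_cast hcards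
  obtain ⟨k, hk⟩ := Finset.card_eq_one.mp hcard
  refine ⟨k, fun j => ?_⟩
  by_cases hj : j = k
  · subst hj
    have : j ∈ s := hk ▸ Finset.mem_singleton_self j
    simpa [hsdef] using this
  · simp only [hj, if_false]
    rcases h01 j with h | h
    · exact h
    · exfalso
      have : j ∈ s := by simp [hsdef, h]
      rw [hk, Finset.mem_singleton] at this
      exact hj this
theorem stmt17 (m : ℕ) (hm : 1 ≤ m)
    (C : Set (EuclideanSpace ℝ (Fin m)))
    (hC : C = {x | ∀ j, x j ∈ Set.Icc (0 : ℝ) 1})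
    (φ : C → C) (hφ : Isometry φ)
    (z o : C)
    (hz : ∀ j, (z : EuclideanSpace ℝ (Fin m)) j = 0)
    (ho : ∀ j, (o : EuclideanSpace ℝ (Fin m)) j = 1)
    (hends : ({φ z, φ o} : Set C) = {z, o}) :
    ∃ τ : Equiv.Perm (Fin m),
      (∀ (x : C) (j : Fin m),
          (φ x : EuclideanSpace ℝ (Fin m)) j = (x : EuclideanSpace ℝ (Fin m)) (τ j)) ∨
      (∀ (x : C) (j : Fin m),
          (φ x : EuclideanSpace ℝ (Fin m)) j = 1 - (x : EuclideanSpace ℝ (Fin m)) (τ j)) := by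
  classical
  -- squared-distance identity
  have hdist : ∀ a b : C, ∑ j, ((φ a : EuclideanSpace ℝ (Fin m)) j - (φ b : EuclideanSpace ℝ (Fin m)) j)^2
      = ∑ j, ((a : EuclideanSpace ℝ (Fin m)) j - (b : EuclideanSpace ℝ (Fin m)) j)^2 := by
    intro a b
    have h1 := hφ.dist_eq a b
    rw [Subtype.dist_eq, Subtype.dist_eq, EuclideanSpace.dist_eq, EuclideanSpace.dist_eq] at h1
    have h2 := congrArg (· ^ 2) h1
    simp only [] at h2
    rw [Real.sq_sqrt (Finset.sum_nonneg fun _ _ => sq_nonneg _),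
        Real.sq_sqrt (Finset.sum_nonneg fun _ _ => sq_nonneg _)] at h2
    simpa [Real.dist_eq, sq_abs] using h2
  -- membership of vertices
  have hmem : ∀ x : C, ∀ j, (x : EuclideanSpace ℝ (Fin m)) j ∈ Set.Icc (0:ℝ) 1 := by
    intro x j
    have hx := x.2
    simp only [hC, Set.mem_setOf_eq] at hx
    exact hx j
  -- the basis vertices
  have he : ∀ i : Fin m, (show EuclideanSpace ℝ (Fin m) from WithLp.toLp 2 (fun j => if j = i then (1:ℝ) else 0)) ∈ C := by
    intro i
    rw [hC]
    intro j
    by_cases h : j = i <;> simp [h]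
  set e : Fin m → C := fun i => ⟨WithLp.toLp 2 (fun j => if j = i then (1:ℝ) else 0), he i⟩ with hedef
  have he' : ∀ i j, (e i : EuclideanSpace ℝ (Fin m)) j = if j = i then 1 else 0 := fun i j => rfl
  have hzo : z ≠ o := by
    intro h
    have := congrArg (fun x : C => (x : EuclideanSpace ℝ (Fin m)) ⟨0, hm⟩) h
    simp only [hz, ho] at this
    norm_num at this
  have hinj : Function.Injective φ := hφ.injective
  -- case analysis on the ends
  have hφz : φ z ∈ ({z, o} : Set C) := hends ▸ (Set.mem_insert _ _)
  have hφo : φ o ∈ ({z, o} : Set C) := hends ▸ (Set.mem_insert_iff.mpr (Or.inr rfl))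
  have hcases : (φ z = z ∧ φ o = o) ∨ (φ z = o ∧ φ o = z) := by
    rcases hφz with h1 | h1 <;> rcases hφo with h2 | h2
    · exact absurd (hinj (h1.trans h2.symm)) hzo
    · exact Or.inl ⟨h1, h2⟩
    · exact Or.inr ⟨h1, h2⟩
    · exact absurd (hinj (h1.trans h2.symm)) hzo
  -- helper sums
  have sum_e_sq : ∀ i, ∑ j, ((e i : EuclideanSpace ℝ (Fin m)) j)^2 = 1 := by
    intro i
    simp only [he']
    have hsq : ∀ j : Fin m, (if j = i then (1:ℝ) else 0)^2 = (if j = i then (1:ℝ) else 0) := by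
      intro j; split_ifs <;> norm_num
    rw [Finset.sum_congr rfl (fun j _ => hsq j)]
    simp
  have sum_e_sq' : ∀ i, ∑ j, ((e i : EuclideanSpace ℝ (Fin m)) j - 1)^2 = (m : ℝ) - 1 := by
    intro i
    simp only [he']
    rw [Finset.sum_congr rfl (fun j _ =>
      show (((if j = i then (1:ℝ) else 0)) - 1)^2 = 1 - (if j = i then (1:ℝ) else 0) from by
        by_cases h : j = i <;> simp [h])]
    rw [Finset.sum_sub_distrib]
    simp [Finset.sum_ite_eq' Finset.univ i (fun _ => (1:ℝ))]
  rcases hcases with ⟨h1, h2⟩ | ⟨h1, h2⟩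
  · -- identity-type case : φ z = z, φ o = o
    have key : ∀ i : Fin m, ∃ k, ∀ j,
        (φ (e i) : EuclideanSpace ℝ (Fin m)) j = if j = k then 1 else 0 := by
      intro i
      set y : Fin m → ℝ := fun j => (φ (e i) : EuclideanSpace ℝ (Fin m)) j with hy
      have d1 : ∑ j, (y j)^2 = 1 := by
        have := hdist (e i) z
        rw [h1] at this
        simp only [hz, sub_zero] at this
        rw [this]
        simpa [hz] using sum_e_sq i
      have d2 : ∑ j, (y j - 1)^2 = (m : ℝ) - 1 := by
        have := hdist (e i) o
        rw [h2] at this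
        simp only [ho] at this
        rw [this]
        exact sum_e_sq' i
      have dsum : ∑ j, y j = 1 := by
        have hexp : ∑ j, (y j - 1)^2 = (∑ j, (y j)^2) - 2 * (∑ j, y j) + m := by
          rw [Finset.sum_congr rfl (fun j (_ : j ∈ Finset.univ) =>
            show (y j - 1)^2 = (y j)^2 - 2 * y j + 1 from by ring)]
          rw [Finset.sum_add_distrib, Finset.sum_sub_distrib, ← Finset.mul_sum]
          simp
        rw [hexp, d1] at d2
        linarith
      exact stmt17_vertex y (fun j => hmem (φ (e i)) j) dsum d1
    choose σ hσ using key
    have hσinj : Function.Injective σ := by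
      intro i i' h
      have : φ (e i) = φ (e i') := by
        apply Subtype.ext
        ext j
        rw [hσ i j, hσ i' j, h]
      have he2 := hinj this
      have := congrArg (fun x : C => (x : EuclideanSpace ℝ (Fin m)) i) he2
      simp only [he'] at this
      by_contra hne
      simp [hne] at this
    have hσbij : Function.Bijective σ := (Finite.injective_iff_bijective).mp hσinj
    set τ0 : Equiv.Perm (Fin m) := Equiv.ofBijective σ hσbij with hτ0
    refine ⟨τ0.symm, Or.inl fun x j => ?_⟩
    -- coordinate recovery
    have coord : ∀ i, (φ x : EuclideanSpace ℝ (Fin m)) (σ i) = (x : EuclideanSpace ℝ (Fin m)) i := by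
      intro i
      have hA : ∑ j, ((φ x : EuclideanSpace ℝ (Fin m)) j)^2
          = ∑ j, ((x : EuclideanSpace ℝ (Fin m)) j)^2 := by
        have := hdist x z
        rw [h1] at this
        simpa [hz] using this
      have hB := hdist x (e i)
      have hφe : ∀ j, (φ (e i) : EuclideanSpace ℝ (Fin m)) j = if j = σ i then 1 else 0 := hσ i
      simp only [hφe, he'] at hB
      rw [stmt17_expand _ (σ i), stmt17_expand _ i, hA] at hB
      linarith
    have := coord (τ0.symm j)
    have hj : σ (τ0.symm j) = j := τ0.apply_symm_apply j
    rw [hj] at this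
    exact this
  · -- flip-type case : φ z = o, φ o = z
    have key : ∀ i : Fin m, ∃ k, ∀ j,
        (φ (e i) : EuclideanSpace ℝ (Fin m)) j = 1 - (if j = k then 1 else 0) := by
      intro i
      set y : Fin m → ℝ := fun j => 1 - (φ (e i) : EuclideanSpace ℝ (Fin m)) j with hy
      have d1 : ∑ j, (y j)^2 = 1 := by
        have := hdist (e i) z
        rw [h1] at this
        simp only [ho, hz, sub_zero] at this
        calc ∑ j, (y j)^2 = ∑ j, ((φ (e i) : EuclideanSpace ℝ (Fin m)) j - 1)^2 := by
              exact Finset.sum_congr rfl (fun j _ => by simp only [hy]; ring)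
          _ = 1 := by rw [this]; simpa using sum_e_sq i
      have d2 : ∑ j, (y j - 1)^2 = (m : ℝ) - 1 := by
        have := hdist (e i) o
        rw [h2] at this
        simp only [hz, ho, sub_zero] at this
        calc ∑ j, (y j - 1)^2 = ∑ j, ((φ (e i) : EuclideanSpace ℝ (Fin m)) j)^2 := by
              exact Finset.sum_congr rfl (fun j _ => by simp only [hy]; ring)
          _ = (m:ℝ) - 1 := by rw [this]; exact sum_e_sq' i
      have dsum : ∑ j, y j = 1 := by
        have hexp : ∑ j, (y j - 1)^2 = (∑ j, (y j)^2) - 2 * (∑ j, y j) + m := by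
          rw [Finset.sum_congr rfl (fun j (_ : j ∈ Finset.univ) =>
            show (y j - 1)^2 = (y j)^2 - 2 * y j + 1 from by ring)]
          rw [Finset.sum_add_distrib, Finset.sum_sub_distrib, ← Finset.mul_sum]
          simp
        rw [hexp, d1] at d2
        linarith
      have hymem : ∀ j, y j ∈ Set.Icc (0:ℝ) 1 := by
        intro j
        have := hmem (φ (e i)) j
        simp only [Set.mem_Icc] at this ⊢
        simp only [hy]
        constructor <;> simp <;> linarith [this.1, this.2]
      obtain ⟨k, hk⟩ := stmt17_vertex y hymem dsum d1
      exact ⟨k, fun j => by have := hk j; simp only [hy] at this; linarith⟩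
    choose σ hσ using key
    have hσinj : Function.Injective σ := by
      intro i i' h
      have : φ (e i) = φ (e i') := by
        apply Subtype.ext
        ext j
        rw [hσ i j, hσ i' j, h]
      have he2 := hinj this
      have := congrArg (fun x : C => (x : EuclideanSpace ℝ (Fin m)) i) he2
      simp only [he'] at this
      by_contra hne
      simp [hne] at this
    have hσbij : Function.Bijective σ := (Finite.injective_iff_bijective).mp hσinj
    set τ0 : Equiv.Perm (Fin m) := Equiv.ofBijective σ hσbij with hτ0
    refine ⟨τ0.symm, Or.inr fun x j => ?_⟩
    have coord : ∀ i, (φ x : EuclideanSpace ℝ (Fin m)) (σ i)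
        = 1 - (x : EuclideanSpace ℝ (Fin m)) i := by
      intro i
      have hA : ∑ j, ((φ x : EuclideanSpace ℝ (Fin m)) j - 1)^2
          = ∑ j, ((x : EuclideanSpace ℝ (Fin m)) j)^2 := by
        have := hdist x z
        rw [h1] at this
        simpa [hz, ho] using this
      have hB := hdist x (e i)
      have hφe : ∀ j, (φ (e i) : EuclideanSpace ℝ (Fin m)) j = 1 - (if j = σ i then 1 else 0) := hσ i
      simp only [hφe, he'] at hB
      rw [stmt17_expand' _ (σ i), stmt17_expand _ i, hA] at hB
      linarith
    have := coord (τ0.symm j)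
    have hj : σ (τ0.symm j) = j := τ0.apply_symm_apply j
    rw [hj] at this
    exact this
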